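/- arXiv:2412.12520 — 2 statements merged into one kernel-verified Lean document; each statement's English description precedes it below -/
import Mathlib

section
/- Let $A\in\mathbb{R}^{n\times n}$, $C\in\mathbb{R}^{p\times n}$. Suppose that for every discrete probability measure $\mu_0$ on $\mathbb{R}^n$ and every $x\in\mathbb{R}^n$ there exists $t\geq 0$ such that $\mu_0\big((x+\ker Ce^{At})\setminus\{x\}\big)=0$. Then the LTI discrete ensemble with structural dynamics $(A,C)$ is observable: for any two distinct discrete probability measures $\mu_0^{(1)}\neq\mu_0^{(2)}$ there exists $t\geq 0$ with $(Ce^{At})_\#\mu_0^{(1)}\neq(Ce^{At})_\#\mu_0^{(2)}$. -/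
open MeasureTheory

/-- A probability measure is discrete if some countable set has full measure. -/
def IsDiscreteMeasure {α : Type*} [MeasurableSpace α] (μ : Measure α) : Prop :=
  ∃ S : Set α, S.Countable ∧ μ S = 1

/-- Two discrete probability measures agreeing on all singletons are equal. -/
lemma discrete_measure_ext {α : Type*} [MeasurableSpace α] [MeasurableSingletonClass α]
    (μ1 μ2 : Measure α) (h1 : IsProbabilityMeasure μ1) (h2 : IsProbabilityMeasure μ2)
    (hd1 : IsDiscreteMeasure μ1) (hd2 : IsDiscreteMeasure μ2)
    (h : ∀ x, μ1 {x} = μ2 {x}) : μ1 = μ2 := by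
  obtain ⟨S1, hS1c, hS1⟩ := hd1
  obtain ⟨S2, hS2c, hS2⟩ := hd2
  set S := S1 ∪ S2 with hS
  have hSc : S.Countable := hS1c.union hS2c
  have hSm : MeasurableSet S := hSc.measurableSet
  have full1 : μ1 Sᶜ = 0 := by
    have : μ1 S = 1 := le_antisymm prob_le_one
      (hS1 ▸ measure_mono Set.subset_union_left)
    rw [measure_compl hSm (by simp), this]; simp
  have full2 : μ2 Sᶜ = 0 := by
    have : μ2 S = 1 := le_antisymm prob_le_one
      (hS2 ▸ measure_mono Set.subset_union_right)
    rw [measure_compl hSm (by simp), this]; simp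
  ext E hE
  have inter1 : μ1 E = μ1 (E ∩ S) := by
    have : μ1 (E \ S) = 0 := measure_mono_null (Set.diff_subset_compl E S) full1
    rw [← measure_inter_add_diff E hSm, this, add_zero]
  have inter2 : μ2 E = μ2 (E ∩ S) := by
    have : μ2 (E \ S) = 0 := measure_mono_null (Set.diff_subset_compl E S) full2
    rw [← measure_inter_add_diff E hSm, this, add_zero]
  have hESc : (E ∩ S).Countable := hSc.mono Set.inter_subset_right
  have key : ∀ (μ : Measure α), μ (E ∩ S) = ∑' b : (E ∩ S : Set α), μ {(b : α)} := by
    intro μ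
    have := tsum_measure_preimage_singleton (μ := μ) hESc (f := id)
      (fun y _ => measurableSet_singleton y)
    simpa using this.symm
  rw [inter1, inter2, key μ1, key μ2]
  exact tsum_congr fun b => h b

theorem sufficient_condition_for_ensemble_observability
    (n p : ℕ) (A : Matrix (Fin n) (Fin n) ℝ) (C : Matrix (Fin p) (Fin n) ℝ)
    (hsuff : ∀ μ0 : Measure (Fin n → ℝ), IsProbabilityMeasure μ0 →
      IsDiscreteMeasure μ0 → ∀ x : Fin n → ℝ, ∃ t : ℝ, 0 ≤ t ∧
        μ0 ({y | (C * NormedSpace.exp (t • A)).mulVec (y - x) = 0} \ {x}) = 0) :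
    ∀ μ1 μ2 : Measure (Fin n → ℝ),
      IsProbabilityMeasure μ1 → IsProbabilityMeasure μ2 →
      IsDiscreteMeasure μ1 → IsDiscreteMeasure μ2 → μ1 ≠ μ2 →
      ∃ t : ℝ, 0 ≤ t ∧
        μ1.map (fun x => (C * NormedSpace.exp (t • A)).mulVec x) ≠
        μ2.map (fun x => (C * NormedSpace.exp (t • A)).mulVec x) := by
  intro μ1 μ2 h1 h2 hd1 hd2 hne
  -- find x with different atoms
  by_cases hx : ∀ x, μ1 {x} = μ2 {x}
  · exact absurd (discrete_measure_ext μ1 μ2 h1 h2 hd1 hd2 hx) hne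
  push_neg at hx
  obtain ⟨x, hxne⟩ := hx
  -- the averaged measure
  set μ0 : Measure (Fin n → ℝ) := (2 : ENNReal)⁻¹ • (μ1 + μ2) with hμ0
  have h0 : IsProbabilityMeasure μ0 := by
    constructor
    simp [hμ0, Measure.add_apply, measure_univ]
    rw [← two_mul, ENNReal.mul_inv_cancel] <;> simp
  have hd0 : IsDiscreteMeasure μ0 := by
    obtain ⟨S1, hS1c, hS1⟩ := hd1
    obtain ⟨S2, hS2c, hS2⟩ := hd2
    refine ⟨S1 ∪ S2, hS1c.union hS2c, ?_⟩
    have e1 : μ1 (S1 ∪ S2) = 1 := le_antisymm prob_le_one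
      (hS1 ▸ measure_mono Set.subset_union_left)
    have e2 : μ2 (S1 ∪ S2) = 1 := le_antisymm prob_le_one
      (hS2 ▸ measure_mono Set.subset_union_right)
    simp [hμ0, Measure.add_apply, e1, e2]
    rw [← two_mul, ENNReal.mul_inv_cancel] <;> simp
  obtain ⟨t, ht, hker⟩ := hsuff μ0 h0 hd0 x
  refine ⟨t, ht, ?_⟩
  set M := C * NormedSpace.exp (t • A) with hM
  have hf : Measurable (fun y : Fin n → ℝ => M.mulVec y) :=
    (M.mulVecLin.continuous_of_finiteDimensional).measurable
  have hK : {y | M.mulVec (y - x) = 0} = (fun y => M.mulVec y) ⁻¹' {M.mulVec x} := by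
    ext y
    simp [Matrix.mulVec_sub, sub_eq_zero]
  have hnull1 : μ1 ({y | M.mulVec (y - x) = 0} \ {x}) = 0 := by
    have hle : μ1 ({y | M.mulVec (y - x) = 0} \ {x}) ≤ 2 * μ0 ({y | M.mulVec (y - x) = 0} \ {x}) := by
      simp only [hμ0, Measure.smul_apply, Measure.add_apply, smul_eq_mul]
      rw [← mul_assoc, ENNReal.mul_inv_cancel (by simp) (by simp), one_mul]
      exact le_add_right le_rfl
    rw [hker, mul_zero] at hle
    exact le_antisymm hle zero_le
  have hnull2 : μ2 ({y | M.mulVec (y - x) = 0} \ {x}) = 0 := by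
    have hle : μ2 ({y | M.mulVec (y - x) = 0} \ {x}) ≤ 2 * μ0 ({y | M.mulVec (y - x) = 0} \ {x}) := by
      simp only [hμ0, Measure.smul_apply, Measure.add_apply, smul_eq_mul]
      rw [← mul_assoc, ENNReal.mul_inv_cancel (by simp) (by simp), one_mul]
      exact le_add_left le_rfl
    rw [hker, mul_zero] at hle
    exact le_antisymm hle zero_le
  have hxmem : x ∈ {y | M.mulVec (y - x) = 0} := by simp [Matrix.mulVec_sub, sub_eq_zero]
  have hsplit : ∀ (μ : Measure (Fin n → ℝ)), μ ({y | M.mulVec (y - x) = 0} \ {x}) = 0 →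
      μ {y | M.mulVec (y - x) = 0} = μ {x} := by
    intro μ hnull
    calc μ {y | M.mulVec (y - x) = 0}
          = μ ({y | M.mulVec (y - x) = 0} ∩ {x}) + μ ({y | M.mulVec (y - x) = 0} \ {x}) :=
            (measure_inter_add_diff _ (measurableSet_singleton x)).symm
        _ = μ {x} := by
            rw [hnull, add_zero]
            congr 1
            exact Set.inter_eq_right.mpr (Set.singleton_subset_iff.mpr hxmem)
  intro heq
  have e1 : μ1.map (fun y => M.mulVec y) {M.mulVec x} = μ1 {x} := by
    rw [Measure.map_apply hf (measurableSet_singleton _), ← hK, hsplit μ1 hnull1]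
  have e2 : μ2.map (fun y => M.mulVec y) {M.mulVec x} = μ2 {x} := by
    rw [Measure.map_apply hf (measurableSet_singleton _), ← hK, hsplit μ2 hnull2]
  rw [heq, e2] at e1
  exact hxne e1.symm
end

section
/- A continuous-time LTI discrete ensemble with structural dynamics $(A,C)$ is ensemble observable if and only if the pair $(A,C)$ is observable (i.e., $\bigcap_{t\geq 0}\ker Ce^{At}=\{0\}$). -/
open MeasureTheory

section Aux

attribute [local instance] Matrix.linftyOpNormedRing Matrix.linftyOpNormedAlgebra

variable {n p : ℕ}

private lemma obs_analytic (A : Matrix (Fin n) (Fin n) ℝ) (C : Matrix (Fin p) (Fin n) ℝ)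
    (x : Fin n → ℝ) :
    AnalyticOnNhd ℝ (fun t : ℝ => (C * NormedSpace.exp (t • A)).mulVec x) Set.univ := by
  obtain ⟨L, hLe⟩ : ∃ L : Matrix (Fin n) (Fin n) ℝ →L[ℝ] (Fin p → ℝ),
      ∀ B, L B = (C * B).mulVec x :=
    ⟨LinearMap.toContinuousLinearMap
      { toFun := fun B => (C * B).mulVec x
        map_add' := fun B1 B2 => by
          show (C * (B1 + B2)).mulVec x = (C * B1).mulVec x + (C * B2).mulVec x
          rw [Matrix.mul_add, Matrix.add_mulVec]
        map_smul' := fun c B => by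
          show (C * (c • B)).mulVec x = c • (C * B).mulVec x
          rw [Matrix.mul_smul, Matrix.smul_mulVec] }, fun B => rfl⟩
  obtain ⟨φ, hφe⟩ : ∃ φ : ℝ →L[ℝ] Matrix (Fin n) (Fin n) ℝ, ∀ t, φ t = t • A :=
    ⟨(ContinuousLinearMap.id ℝ ℝ).smulRight A, fun t => rfl⟩
  have heq : (fun t : ℝ => (C * NormedSpace.exp (t • A)).mulVec x)
      = fun t => L (NormedSpace.exp (φ t)) := by
    funext t; rw [hφe, hLe]
  rw [heq]
  intro t _
  exact (L.analyticAt _).comp ((NormedSpace.exp_analytic _).comp (φ.analyticAt t))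

private lemma exists_good_t (A : Matrix (Fin n) (Fin n) ℝ) (C : Matrix (Fin p) (Fin n) ℝ)
    (hObs : {x : Fin n → ℝ | ∀ t : ℝ, 0 ≤ t → (C * NormedSpace.exp (t • A)).mulVec x = 0}
      = {0})
    (D : Set (Fin n → ℝ)) (hD : D.Countable) (h0 : (0 : Fin n → ℝ) ∉ D) :
    ∃ t : ℝ, 0 ≤ t ∧ ∀ d ∈ D, (C * NormedSpace.exp (t • A)).mulVec d ≠ 0 := by
  have hcont : ∀ d : Fin n → ℝ,
      Continuous (fun t : ℝ => (C * NormedSpace.exp (t • A)).mulVec d) := by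
    intro d
    rw [← continuousOn_univ]
    exact (obs_analytic A C d).continuousOn
  have hdense : Dense (⋂ d ∈ D,
      {t : ℝ | (C * NormedSpace.exp (t • A)).mulVec d ≠ 0}) := by
    refine dense_biInter_of_isOpen (fun d _ => ?_) hD (fun d hd => ?_)
    · exact (isClosed_eq (hcont d) continuous_const).isOpen_compl
    · have hcompl : {t : ℝ | (C * NormedSpace.exp (t • A)).mulVec d ≠ 0}
          = {t : ℝ | (C * NormedSpace.exp (t • A)).mulVec d = 0}ᶜ := rfl
      rw [hcompl, ← interior_eq_empty_iff_dense_compl]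
      by_contra hne
      obtain ⟨t0, ht0⟩ := Set.nonempty_iff_ne_empty.2 hne
      have hev : (fun t : ℝ => (C * NormedSpace.exp (t • A)).mulVec d) =ᶠ[nhds t0] 0 := by
        filter_upwards [mem_interior_iff_mem_nhds.1 ht0] with y hy
        exact hy
      have hzero := (obs_analytic A C d).eqOn_zero_of_preconnected_of_eventuallyEq_zero
        isPreconnected_univ (Set.mem_univ t0) hev
      have hd0 : d ∈ {x : Fin n → ℝ | ∀ t : ℝ, 0 ≤ t →
          (C * NormedSpace.exp (t • A)).mulVec x = 0} :=
        fun t _ => hzero (Set.mem_univ t)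
      rw [hObs] at hd0
      exact h0 (hd0 ▸ hd)
  obtain ⟨t, htI, htM⟩ := hdense.inter_open_nonempty (Set.Ioi 0) isOpen_Ioi ⟨1, Set.mem_Ioi.2 one_pos⟩
  refine ⟨t, le_of_lt htI, fun d hd => ?_⟩
  exact Set.mem_iInter₂.1 htM d hd

end Aux

private lemma discrete_measure_eq_of_map_eq {α β : Type*}
    [MeasurableSpace α] [MeasurableSingletonClass α]
    [MeasurableSpace β] [MeasurableSingletonClass β]
    {μ1 μ2 : Measure α} [IsProbabilityMeasure μ1] [IsProbabilityMeasure μ2]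
    {S : Set α} (hSc : S.Countable) (h1 : μ1 S = 1) (h2 : μ2 S = 1)
    {f : α → β} (hf : Measurable f) (hinj : Set.InjOn f S)
    (h : μ1.map f = μ2.map f) : μ1 = μ2 := by
  have hSm : MeasurableSet S := hSc.measurableSet
  have hc1 : μ1 Sᶜ = 0 := (prob_compl_eq_zero_iff hSm).2 h1
  have hc2 : μ2 Sᶜ = 0 := (prob_compl_eq_zero_iff hSm).2 h2
  have key : ∀ (μ : Measure α), μ Sᶜ = 0 → ∀ T : Set α,
      μ T = μ (T ∩ S) := by
    intro μ hc T
    refine le_antisymm ?_ (measure_mono Set.inter_subset_left)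
    calc μ T = μ ((T ∩ S) ∪ (T ∩ Sᶜ)) := by rw [Set.inter_union_compl]
      _ ≤ μ (T ∩ S) + μ (T ∩ Sᶜ) := measure_union_le _ _
      _ ≤ μ (T ∩ S) + μ Sᶜ := add_le_add le_rfl (measure_mono Set.inter_subset_right)
      _ = μ (T ∩ S) := by rw [hc, add_zero]
  have hpoint : ∀ s ∈ S, μ1 {s} = μ2 {s} := by
    intro s hs
    have hpre : f ⁻¹' {f s} ∩ S = {s} := by
      ext y
      simp only [Set.mem_inter_iff, Set.mem_preimage, Set.mem_singleton_iff]
      constructor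
      · rintro ⟨hy, hyS⟩; exact hinj hyS hs hy
      · rintro rfl; exact ⟨rfl, hs⟩
    have e1 : ∀ (μ : Measure α), μ Sᶜ = 0 → μ {s} = (μ.map f) {f s} := by
      intro μ hc
      rw [Measure.map_apply hf (measurableSet_singleton _), key μ hc (f ⁻¹' {f s}), hpre]
    rw [e1 μ1 hc1, e1 μ2 hc2, h]
  refine Measure.ext fun E hE => ?_
  have hES : (E ∩ S).Countable := hSc.mono Set.inter_subset_right
  have hrw : ∀ (μ : Measure α), μ (E ∩ S) = ∑' x : ↥(E ∩ S), μ {(x : α)} := by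
    intro μ
    conv_lhs => rw [← Set.biUnion_of_singleton (E ∩ S)]
    exact measure_biUnion hES (fun a _ b _ hab => Set.disjoint_singleton.2 hab)
      (fun b _ => measurableSet_singleton b)
  rw [key μ1 hc1 E, key μ2 hc2 E, hrw μ1, hrw μ2]
  exact tsum_congr fun x => hpoint x x.2.2

theorem ensemble_observability_iff_observability
    (n p : ℕ) (A : Matrix (Fin n) (Fin n) ℝ) (C : Matrix (Fin p) (Fin n) ℝ) :
    (∀ μ1 μ2 : Measure (Fin n → ℝ),
      IsProbabilityMeasure μ1 → IsProbabilityMeasure μ2 →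
      IsDiscreteMeasure μ1 → IsDiscreteMeasure μ2 → μ1 ≠ μ2 →
      ∃ t : ℝ, 0 ≤ t ∧
        μ1.map (fun x => (C * NormedSpace.exp (t • A)).mulVec x) ≠
        μ2.map (fun x => (C * NormedSpace.exp (t • A)).mulVec x)) ↔
    {x : Fin n → ℝ | ∀ t : ℝ, 0 ≤ t → (C * NormedSpace.exp (t • A)).mulVec x = 0}
      = {0} := by
  have hmeas : ∀ t : ℝ, Measurable
      (fun x : Fin n → ℝ => (C * NormedSpace.exp (t • A)).mulVec x) := by
    intro t
    exact ((C * NormedSpace.exp (t • A)).mulVecLin.continuous_of_finiteDimensional).measurable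
  constructor
  · intro hE
    ext x
    simp only [Set.mem_setOf_eq, Set.mem_singleton_iff]
    constructor
    · intro hx
      by_contra hx0
      have hdne : (Measure.dirac x : Measure (Fin n → ℝ)) ≠ Measure.dirac 0 := by
        intro hcontra
        have h1 : (Measure.dirac x : Measure (Fin n → ℝ)) {x} = 1 := by
          rw [Measure.dirac_apply' _ (measurableSet_singleton x)]
          simp
        have h2 : (Measure.dirac (0 : Fin n → ℝ)) {x} = 0 := by
          rw [Measure.dirac_apply' _ (measurableSet_singleton x)]
          simp [Ne.symm hx0]
        rw [hcontra, h2] at h1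
        exact zero_ne_one h1
      obtain ⟨t, ht, hne⟩ := hE (Measure.dirac x) (Measure.dirac 0) inferInstance inferInstance
        ⟨{x}, Set.countable_singleton x, by
          rw [Measure.dirac_apply' _ (measurableSet_singleton x)]; simp⟩
        ⟨{0}, Set.countable_singleton 0, by
          rw [Measure.dirac_apply' _ (measurableSet_singleton 0)]; simp⟩
        hdne
      apply hne
      rw [Measure.map_dirac' (hmeas t), Measure.map_dirac' (hmeas t), hx t ht,
        Matrix.mulVec_zero]
    · rintro rfl t _
      exact Matrix.mulVec_zero _
  · intro hObs μ1 μ2 hp1 hp2 hd1 hd2 hne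
    by_contra hcon
    push_neg at hcon
    obtain ⟨S1, hc1, h1⟩ := hd1
    obtain ⟨S2, hc2, h2⟩ := hd2
    haveI := hp1; haveI := hp2
    set S : Set (Fin n → ℝ) := S1 ∪ S2 with hS
    have hSc : S.Countable := hc1.union hc2
    have hS1 : μ1 S = 1 :=
      le_antisymm prob_le_one (h1 ▸ measure_mono Set.subset_union_left)
    have hS2 : μ2 S = 1 :=
      le_antisymm prob_le_one (h2 ▸ measure_mono Set.subset_union_right)
    set D : Set (Fin n → ℝ) :=
      ((fun q : (Fin n → ℝ) × (Fin n → ℝ) => q.1 - q.2) '' (S ×ˢ S)) \ {0} with hD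
    have hDc : D.Countable := (Set.Countable.image (hSc.prod hSc) _).mono Set.diff_subset
    have hD0 : (0 : Fin n → ℝ) ∉ D := fun hmem => hmem.2 rfl
    obtain ⟨t, ht, htD⟩ := exists_good_t A C hObs D hDc hD0
    have hinj : Set.InjOn
        (fun x : Fin n → ℝ => (C * NormedSpace.exp (t • A)).mulVec x) S := by
      intro a ha b hb hab
      by_contra habne
      have hmem : a - b ∈ D := by
        refine ⟨⟨(a, b), ⟨ha, hb⟩, rfl⟩, ?_⟩
        simp only [Set.mem_singleton_iff]
        exact sub_ne_zero.2 habne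
      apply htD (a - b) hmem
      have hab' : (C * NormedSpace.exp (t • A)).mulVec a
          = (C * NormedSpace.exp (t • A)).mulVec b := hab
      rw [Matrix.mulVec_sub, hab', sub_self]
    exact hne (discrete_measure_eq_of_map_eq hSc hS1 hS2 (hmeas t) hinj (hcon t ht))
end
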